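/- For every natural number m there exists a finite point set P ⊂ ℝ² with exactly m points lying in the interior of conv(P), together with two convex polygons with vertices in P whose union is conv(P), whose interiors are disjoint, and whose boundaries together contain all points of P. -/

import Mathlib

open Set

private lemma hull_absorb {c e : Set (ℝ × ℝ)} (he : e ⊆ convexHull ℝ c) :
    convexHull ℝ (c ∪ e) = convexHull ℝ c :=
  Subset.antisymm
    (convexHull_min (union_subset (subset_convexHull ℝ c) he) (convex_convexHull ℝ c))
    (convexHull_mono subset_union_left)

theorem exists_point_set_with_m_inner_points_and_two_faces (m : ℕ) :
    ∃ (P Q₁ Q₂ : Finset (ℝ × ℝ)),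
      (Q₁ : Set (ℝ × ℝ)) ⊆ (P : Set (ℝ × ℝ)) ∧ (Q₂ : Set (ℝ × ℝ)) ⊆ (P : Set (ℝ × ℝ)) ∧
      Set.ncard {p | p ∈ (P : Set (ℝ × ℝ)) ∧ p ∈ interior (convexHull ℝ (P : Set (ℝ × ℝ)))} = m ∧
      convexHull ℝ (Q₁ : Set (ℝ × ℝ)) ∪ convexHull ℝ (Q₂ : Set (ℝ × ℝ))
        = convexHull ℝ (P : Set (ℝ × ℝ)) ∧
      Disjoint (interior (convexHull ℝ (Q₁ : Set (ℝ × ℝ))))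
        (interior (convexHull ℝ (Q₂ : Set (ℝ × ℝ)))) ∧
      ∀ p ∈ (P : Set (ℝ × ℝ)),
        p ∈ frontier (convexHull ℝ (Q₁ : Set (ℝ × ℝ)))
          ∪ frontier (convexHull ℝ (Q₂ : Set (ℝ × ℝ))) := by
  classical
  have hm1 : (0:ℝ) < (m:ℝ) + 1 := by positivity
  set f : ℕ → ℝ × ℝ := fun i => (((i : ℝ) + 1) / ((m:ℝ) + 1), 1/2) with hf
  set M : Finset (ℝ × ℝ) := (Finset.range m).image f with hM
  set C : Finset (ℝ × ℝ) := {(0,1/2),(1,1/2),(0,0),(1,0),(0,1),(1,1)} with hC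
  set B : Finset (ℝ × ℝ) := {(0,0),(1,0),(0,1/2),(1,1/2)} with hB
  set T : Finset (ℝ × ℝ) := {(0,1),(1,1),(0,1/2),(1,1/2)} with hT
  have hMprop : ∀ p ∈ (M : Set (ℝ × ℝ)), 0 < p.1 ∧ p.1 < 1 ∧ p.2 = 1/2 := by
    intro p hp
    simp only [hM, Finset.coe_image, Finset.coe_range, mem_image, mem_Iio] at hp
    obtain ⟨i, hi, rfl⟩ := hp
    have him : (i:ℝ) < m := by exact_mod_cast hi
    refine ⟨by positivity, ?_, rfl⟩
    rw [hf]
    simp only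
    rw [div_lt_one hm1]
    linarith
  -- 1-dimensional hulls
  have h01 : convexHull ℝ ({0,1} : Set ℝ) = Icc (0:ℝ) 1 := by
    rw [convexHull_pair, segment_eq_Icc zero_le_one]
  have h0h : convexHull ℝ ({0,1/2} : Set ℝ) = Icc (0:ℝ) (1/2) := by
    rw [convexHull_pair, segment_eq_Icc (by norm_num)]
  have hh1 : convexHull ℝ ({1/2,1} : Set ℝ) = Icc (1/2:ℝ) 1 := by
    rw [convexHull_pair, segment_eq_Icc (by norm_num)]
  have h3 : convexHull ℝ ({0,1/2,1} : Set ℝ) = Icc (0:ℝ) 1 := by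
    apply Subset.antisymm
    · exact convexHull_min (by norm_num [insert_subset_iff]) (convex_Icc 0 1)
    · rw [← h01]
      exact convexHull_mono (by intro x hx; simp at hx ⊢; tauto)
  -- coercions as products
  have hBset : (B : Set (ℝ × ℝ)) = ({0,1} : Set ℝ) ×ˢ ({0,1/2} : Set ℝ) := by
    ext ⟨a,b⟩
    simp [hB, Set.mem_prod, Prod.ext_iff]
    tauto
  have hTset : (T : Set (ℝ × ℝ)) = ({0,1} : Set ℝ) ×ˢ ({1/2,1} : Set ℝ) := by
    ext ⟨a,b⟩
    simp [hT, Set.mem_prod, Prod.ext_iff]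
    tauto
  have hCset : (C : Set (ℝ × ℝ)) = ({0,1} : Set ℝ) ×ˢ ({0,1/2,1} : Set ℝ) := by
    ext ⟨a,b⟩
    simp [hC, Set.mem_prod, Prod.ext_iff]
    tauto
  -- hulls of corner sets
  have hBhull : convexHull ℝ (B : Set (ℝ × ℝ)) = Icc (0:ℝ) 1 ×ˢ Icc (0:ℝ) (1/2) := by
    rw [hBset, convexHull_prod, h01, h0h]
  have hThull : convexHull ℝ (T : Set (ℝ × ℝ)) = Icc (0:ℝ) 1 ×ˢ Icc (1/2:ℝ) 1 := by
    rw [hTset, convexHull_prod, h01, hh1]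
  have hChull : convexHull ℝ (C : Set (ℝ × ℝ)) = Icc (0:ℝ) 1 ×ˢ Icc (0:ℝ) 1 := by
    rw [hCset, convexHull_prod, h01, h3]
  -- M sits inside each hull
  have hMB : (M : Set (ℝ × ℝ)) ⊆ convexHull ℝ (B : Set (ℝ × ℝ)) := by
    rw [hBhull]; intro p hp
    obtain ⟨h1, h2, h3'⟩ := hMprop p hp
    exact ⟨⟨le_of_lt h1, le_of_lt h2⟩, by rw [h3']; norm_num⟩
  have hMT : (M : Set (ℝ × ℝ)) ⊆ convexHull ℝ (T : Set (ℝ × ℝ)) := by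
    rw [hThull]; intro p hp
    obtain ⟨h1, h2, h3'⟩ := hMprop p hp
    exact ⟨⟨le_of_lt h1, le_of_lt h2⟩, by rw [h3']; norm_num⟩
  have hMC : (M : Set (ℝ × ℝ)) ⊆ convexHull ℝ (C : Set (ℝ × ℝ)) := by
    rw [hChull]; intro p hp
    obtain ⟨h1, h2, h3'⟩ := hMprop p hp
    exact ⟨⟨le_of_lt h1, le_of_lt h2⟩, by rw [h3']; norm_num⟩
  have hQ1 : convexHull ℝ ((B ∪ M : Finset (ℝ × ℝ)) : Set (ℝ × ℝ))
      = Icc (0:ℝ) 1 ×ˢ Icc (0:ℝ) (1/2) := by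
    rw [Finset.coe_union, hull_absorb hMB, hBhull]
  have hQ2 : convexHull ℝ ((T ∪ M : Finset (ℝ × ℝ)) : Set (ℝ × ℝ))
      = Icc (0:ℝ) 1 ×ˢ Icc (1/2:ℝ) 1 := by
    rw [Finset.coe_union, hull_absorb hMT, hThull]
  have hP : convexHull ℝ ((C ∪ M : Finset (ℝ × ℝ)) : Set (ℝ × ℝ))
      = Icc (0:ℝ) 1 ×ˢ Icc (0:ℝ) 1 := by
    rw [Finset.coe_union, hull_absorb hMC, hChull]
  -- interiors
  have hi1 : interior (Icc (0:ℝ) 1 ×ˢ Icc (0:ℝ) (1/2)) = Ioo (0:ℝ) 1 ×ˢ Ioo (0:ℝ) (1/2) := by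
    rw [interior_prod_eq, interior_Icc, interior_Icc]
  have hi2 : interior (Icc (0:ℝ) 1 ×ˢ Icc (1/2:ℝ) 1) = Ioo (0:ℝ) 1 ×ˢ Ioo (1/2:ℝ) 1 := by
    rw [interior_prod_eq, interior_Icc, interior_Icc]
  have hiP : interior (Icc (0:ℝ) 1 ×ˢ Icc (0:ℝ) 1) = Ioo (0:ℝ) 1 ×ˢ Ioo (0:ℝ) 1 := by
    rw [interior_prod_eq, interior_Icc]
  have hBC : (B : Set (ℝ × ℝ)) ⊆ (C : Set (ℝ × ℝ)) := by
    rw [hBset, hCset]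
    refine Set.prod_mono subset_rfl ?_
    intro x hx; simp at hx ⊢; tauto
  have hTC : (T : Set (ℝ × ℝ)) ⊆ (C : Set (ℝ × ℝ)) := by
    rw [hTset, hCset]
    refine Set.prod_mono subset_rfl ?_
    intro x hx; simp at hx ⊢; tauto
  refine ⟨C ∪ M, B ∪ M, T ∪ M, ?_, ?_, ?_, ?_, ?_, ?_⟩
  · rw [Finset.coe_union, Finset.coe_union]
    exact union_subset_union hBC subset_rfl
  · rw [Finset.coe_union, Finset.coe_union]
    exact union_subset_union hTC subset_rfl
  · -- ncard
    have hset : {p | p ∈ ((C ∪ M : Finset (ℝ × ℝ)) : Set (ℝ × ℝ)) ∧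
        p ∈ interior (convexHull ℝ ((C ∪ M : Finset (ℝ × ℝ)) : Set (ℝ × ℝ)))}
        = (M : Set (ℝ × ℝ)) := by
      rw [hP, hiP]
      ext p
      simp only [mem_setOf_eq, Finset.coe_union, mem_union]
      constructor
      · rintro ⟨hp, hint⟩
        rcases hp with hp | hp
        · exfalso
          have h1 : p.1 ∈ Ioo (0:ℝ) 1 := hint.1
          have h2 : p.2 ∈ Ioo (0:ℝ) 1 := hint.2
          simp only [hC, Finset.coe_insert, mem_insert_iff, Finset.coe_singleton,
            mem_singleton_iff] at hp
          rcases hp with rfl|rfl|rfl|rfl|rfl|rfl <;>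
            simp only [mem_Ioo] at h1 h2 <;> revert h1 h2 <;> norm_num
        · exact hp
      · intro hp
        obtain ⟨h1, h2, h3'⟩ := hMprop p hp
        exact ⟨Or.inr hp, ⟨h1, h2⟩, by rw [h3']; norm_num⟩
    rw [hset, Set.ncard_coe_finset, hM]
    rw [Finset.card_image_of_injOn, Finset.card_range]
    intro a _ b _ hab
    have h1 := congrArg Prod.fst hab
    simp only [hf] at h1
    rw [div_eq_div_iff hm1.ne' hm1.ne'] at h1
    have h2 := mul_right_cancel₀ (ne_of_gt hm1) h1
    have h4 : (a:ℝ) = b := by linarith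
    exact_mod_cast h4
  · rw [hQ1, hQ2, hP, ← Set.prod_union, Icc_union_Icc_eq_Icc (by norm_num) (by norm_num)]
  · rw [hQ1, hQ2, hi1, hi2, Set.disjoint_left]
    rintro ⟨a,b⟩ ⟨_, hb1⟩ ⟨_, hb2⟩
    simp only [mem_Ioo] at hb1 hb2
    linarith [hb1.2, hb2.1]
  · intro p hp
    have hfr1 : frontier (convexHull ℝ ((B ∪ M : Finset (ℝ × ℝ)) : Set (ℝ × ℝ)))
        = (Icc (0:ℝ) 1 ×ˢ Icc (0:ℝ) (1/2)) \ (Ioo (0:ℝ) 1 ×ˢ Ioo (0:ℝ) (1/2)) := by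
      rw [hQ1, (isClosed_Icc.prod isClosed_Icc).frontier_eq, hi1]
    have hfr2 : frontier (convexHull ℝ ((T ∪ M : Finset (ℝ × ℝ)) : Set (ℝ × ℝ)))
        = (Icc (0:ℝ) 1 ×ˢ Icc (1/2:ℝ) 1) \ (Ioo (0:ℝ) 1 ×ˢ Ioo (1/2:ℝ) 1) := by
      rw [hQ2, (isClosed_Icc.prod isClosed_Icc).frontier_eq, hi2]
    rw [hfr1, hfr2]
    simp only [Finset.coe_union, mem_union] at hp
    rcases hp with hp | hp
    · simp only [hC, Finset.coe_insert, mem_insert_iff, Finset.coe_singleton,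
        mem_singleton_iff] at hp
      rcases hp with rfl|rfl|rfl|rfl|rfl|rfl <;>
        · simp only [mem_union, mem_diff, mem_prod, mem_Icc, mem_Ioo]
          norm_num
    · obtain ⟨h1, h2, h3'⟩ := hMprop p hp
      left
      refine ⟨⟨⟨le_of_lt h1, le_of_lt h2⟩, by rw [h3']; norm_num⟩, ?_⟩
      rw [mem_prod]
      rintro ⟨-, h2'⟩
      rw [h3'] at h2'
      norm_num at h2'
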